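/- Fix n ∈ ℕ, integers w and m, and a function f : (Fin n → Bool) → ℤ such that |f(S) − f(S')| = 1 for every pair of adjacent states S, S'. Suppose there exists a state S₀ with a(S₀) − b(S₀) = w and f(S₀) ≡ m + n (mod 2). Then for every state S, 3w + b(S) − a(S) + 2·f(S) ≡ 2m (mod 4). -/
import Mathlib


open Finset

/-- `a(S)`: the number of `A`-smoothings (coordinates where `S` is `false`). -/
def aCount {n : ℕ} (S : Fin n → Bool) : ℕ := (Finset.univ.filter fun i => S i = false).card

/-- `b(S)`: the number of `B`-smoothings (coordinates where `S` is `true`). -/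
def bCount {n : ℕ} (S : Fin n → Bool) : ℕ := (Finset.univ.filter fun i => S i = true).card

/-- Two states are adjacent if they differ in exactly one coordinate. -/
def Adjacent {n : ℕ} (S S' : Fin n → Bool) : Prop :=
  ∃ i : Fin n, S' = Function.update S i (!(S i))

lemma aCount_add_bCount {n : ℕ} (S : Fin n → Bool) : aCount S + bCount S = n := by
  classical
  have h1 := Finset.card_filter_add_card_filter_not
    (s := (Finset.univ : Finset (Fin n))) (p := fun i => S i = false)
  have h2 : (Finset.univ.filter fun i => ¬ S i = false)
      = Finset.univ.filter fun i => S i = true := by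
    apply Finset.filter_congr
    intro i _
    cases S i <;> simp
  simp only [h2, Finset.card_univ, Fintype.card_fin] at h1
  simpa [aCount, bCount] using h1

lemma bCount_eq_sum {n : ℕ} (S : Fin n → Bool) :
    bCount S = ∑ i, (if S i = true then 1 else 0) := by
  classical
  simpa [bCount] using
    (Finset.card_filter (fun i => S i = true) (Finset.univ : Finset (Fin n)))

lemma bCount_flip {n : ℕ} (S : Fin n → Bool) (j : Fin n) :
    (bCount (Function.update S j (!(S j))) : ℤ) = bCount S + (if S j then -1 else 1) := by
  classical
  have h : ∀ (T : Fin n → Bool), (bCount T : ℤ) = ∑ i, (if T i = true then (1:ℤ) else 0) := by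
    intro T
    rw [bCount_eq_sum]
    push_cast
    simp
  rw [h, h]
  have hfun : (fun i => if (Function.update S j (!(S j))) i = true then (1:ℤ) else 0)
      = Function.update (fun i => if S i = true then (1:ℤ) else 0) j
          (if (!(S j)) = true then (1:ℤ) else 0) := by
    funext i
    by_cases hi : i = j
    · subst hi; simp
    · simp [Function.update_of_ne hi]
  rw [hfun, Finset.sum_update_of_mem (Finset.mem_univ j),
    ← Finset.sum_erase_add _ _ (Finset.mem_univ j)]
  cases hj : S j <;> simp [hj, Finset.sdiff_singleton_eq_erase] <;> ring

/-- Parity of `bCount S + f S` is invariant under a single flip. -/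
lemma parity_flip {n : ℕ} (f : (Fin n → Bool) → ℤ)
    (hf : ∀ S S' : Fin n → Bool, Adjacent S S' → |f S - f S'| = 1)
    (S : Fin n → Bool) (j : Fin n) :
    ((bCount (Function.update S j (!(S j))) : ℤ) + f (Function.update S j (!(S j))))
      ≡ (bCount S : ℤ) + f S [ZMOD 2] := by
  have hb := bCount_flip S j
  have hfj := hf S (Function.update S j (!(S j))) ⟨j, rfl⟩
  have := abs_eq (by norm_num : (0:ℤ) ≤ 1) |>.mp hfj
  unfold Int.ModEq
  rcases this with h | h <;> cases hS : S j <;> simp only [hS] at hb h ⊢ <;> omega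

/-- Parity of `bCount S + f S` is the same for all states. -/
lemma parity_const {n : ℕ} (f : (Fin n → Bool) → ℤ)
    (hf : ∀ S S' : Fin n → Bool, Adjacent S S' → |f S - f S'| = 1)
    (S S' : Fin n → Bool) :
    ((bCount S : ℤ) + f S) ≡ (bCount S' : ℤ) + f S' [ZMOD 2] := by
  classical
  generalize hk : (Finset.univ.filter fun i => S i ≠ S' i).card = k
  induction k generalizing S with
  | zero =>
    have : S = S' := by
      funext i
      by_contra hi
      have : i ∈ Finset.univ.filter fun i => S i ≠ S' i := by simp [hi]
      have := Finset.card_pos.mpr ⟨i, this⟩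
      omega
    rw [this]
  | succ k ih =>
    have hne : (Finset.univ.filter fun i => S i ≠ S' i).Nonempty := by
      rw [← Finset.card_pos, hk]; omega
    obtain ⟨j, hj⟩ := hne
    simp only [Finset.mem_filter, Finset.mem_univ, true_and] at hj
    set T := Function.update S j (!(S j)) with hT
    have hcard : (Finset.univ.filter fun i => T i ≠ S' i).card = k := by
      have : (Finset.univ.filter fun i => T i ≠ S' i)
          = (Finset.univ.filter fun i => S i ≠ S' i).erase j := by
        ext i
        by_cases hi : i = j
        · subst hi
          simp [hT, Function.update_self]
          cases hS : S i <;> cases hS' : S' i <;> simp_all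
        · simp [hT, Function.update_of_ne hi, hi]
      rw [this, Finset.card_erase_of_mem (by simp [hj]), hk]
      omega
    calc ((bCount S : ℤ) + f S) ≡ (bCount T : ℤ) + f T [ZMOD 2] :=
          (parity_flip f hf S j).symm
      _ ≡ (bCount S' : ℤ) + f S' [ZMOD 2] := ih T hcard

/-- computational core of Proposition 4.8: if `f` changes by exactly `±1`
under switching one smoothing, and some state `S₀` satisfies `a(S₀) - b(S₀) = w` and
`f(S₀) ≡ m + n (mod 2)`, then `3w + b(S) - a(S) + 2·f(S) ≡ 2m (mod 4)` for every state `S`. -/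
theorem state_sum_congruence (n : ℕ) (w m : ℤ) (f : (Fin n → Bool) → ℤ)
    (hf : ∀ S S' : Fin n → Bool, Adjacent S S' → |f S - f S'| = 1)
    (h0 : ∃ S₀ : Fin n → Bool,
      (aCount S₀ : ℤ) - (bCount S₀ : ℤ) = w ∧ f S₀ ≡ m + (n : ℤ) [ZMOD 2]) :
    ∀ S : Fin n → Bool,
      3 * w + (bCount S : ℤ) - (aCount S : ℤ) + 2 * f S ≡ 2 * m [ZMOD 4] := by
  obtain ⟨S₀, hw, hm⟩ := h0
  intro S
  have h1 : (aCount S₀ : ℤ) + (bCount S₀ : ℤ) = n := by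
    exact_mod_cast congrArg (Nat.cast : ℕ → ℤ) (aCount_add_bCount S₀)
  have h2 : (aCount S : ℤ) + (bCount S : ℤ) = n := by
    exact_mod_cast congrArg (Nat.cast : ℕ → ℤ) (aCount_add_bCount S)
  have hpar := parity_const f hf S S₀
  unfold Int.ModEq at hpar hm ⊢
  omega
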